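/- Fix l ∈ n_l and m, n ∈ n_b. For an angle vector θ define D_n(θ) := j·( C_{l n}·V_n·conj(I^fr_l) − (Σ_k C_{l k}·V_k)·conj((Y_f)_{l n})·conj(V_n) ) (the θ_n-partial derivative of S^fr_l), so that the θ_n-partial derivative of the squared apparent flow |S^fr_l|² equals 2·Re( conj(S^fr_l)·D_n(θ) ). Then the partial derivative with respect to θ_m of the function θ ↦ 2·Re( conj(S^fr_l)·D_n(θ) ) exists and equals 2·Re( conj(S^fr_l)·E_{m n} + D_m(θ)·conj(D_n(θ)) ), where E_{m n} := −[n = m]·C_{l n}·V_n·conj(I^fr_l) + C_{l n}·V_n·conj((Y_f)_{l m})·conj(V_m) + C_{l m}·V_m·conj((Y_f)_{l n})·conj(V_n) − [n = m]·(Σ_k C_{l k}·V_k)·conj((Y_f)_{l n})·conj(V_n) is the second partial derivative of S^fr_l with respect to θ_m and θ_n. -/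

import Mathlib

open Matrix

/-- Complex bus voltage `V_k = v_k · exp(j θ_k)`. -/
noncomputable def busV {nb : Type*} (v θ : nb → ℝ) (k : nb) : ℂ :=
  (v k : ℂ) * Complex.exp (Complex.I * (θ k : ℂ))

/-- From-end line current `I^fr_l = Σ_k (Y_f)_{l k} V_k`. -/
noncomputable def lineIfr {nl nb : Type*} [Fintype nb] (Yf : Matrix nl nb ℂ)
    (v θ : nb → ℝ) (l : nl) : ℂ :=
  ∑ k, Yf l k * busV v θ k

/-- From-end complex line flow `S^fr_l = (Σ_k C_{l k} V_k) · conj(I^fr_l)`. -/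
noncomputable def lineSfr {nl nb : Type*} [Fintype nb] (C Yf : Matrix nl nb ℂ)
    (v θ : nb → ℝ) (l : nl) : ℂ :=
  (∑ k, C l k * busV v θ k) * (starRingEnd ℂ) (lineIfr Yf v θ l)

/-- `θ_n`-partial derivative of `S^fr_l` as a function of the angle vector:
`D_n(θ) = j (C_{l n} V_n conj(I^fr_l) - (Σ_k C_{l k} V_k) conj((Y_f)_{l n}) conj(V_n))`. -/
noncomputable def lineDfr {nl nb : Type*} [Fintype nb] (C Yf : Matrix nl nb ℂ)
    (v θ : nb → ℝ) (l : nl) (n : nb) : ℂ :=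
  Complex.I *
    (C l n * busV v θ n * (starRingEnd ℂ) (lineIfr Yf v θ l)
      - (∑ k, C l k * busV v θ k) * (starRingEnd ℂ) (Yf l n) *
          (starRingEnd ℂ) (busV v θ n))

lemma hasDerivAt_conj' {f : ℝ → ℂ} {f' : ℂ} {x : ℝ} (hf : HasDerivAt f f' x) :
    HasDerivAt (fun t => (starRingEnd ℂ) (f t)) ((starRingEnd ℂ) f') x := by
  exact
    ((Complex.conjCLE.toContinuousLinearMap).hasFDerivAt.comp_hasDerivAt x hf)

lemma hasDerivAt_busV {nb : Type*} [DecidableEq nb] (v θ : nb → ℝ) (m k : nb) :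
    HasDerivAt (fun t => busV v (Function.update θ m t) k)
      ((if k = m then Complex.I else 0) * busV v θ k) (θ m) := by
  by_cases h : k = m
  · subst h
    simp only [busV, Function.update_self, if_pos rfl]
    have h1 : HasDerivAt (fun t : ℝ => Complex.I * (t : ℂ)) Complex.I (θ k) := by
      simpa using (Complex.ofRealCLM.hasDerivAt (x := θ k)).const_mul Complex.I
    have h2 := (h1.cexp).const_mul (v k : ℂ)
    convert h2 using 1
    any_goals rfl
    simp only [↓reduceIte]
    ring
  · simp only [busV, Function.update_of_ne h, if_neg h, zero_mul]
    exact hasDerivAt_const _ _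

lemma hasDerivAt_sumCV {nl nb : Type*} [Fintype nb] [DecidableEq nb]
    (C : Matrix nl nb ℂ) (v θ : nb → ℝ) (l : nl) (m : nb) :
    HasDerivAt (fun t => ∑ k, C l k * busV v (Function.update θ m t) k)
      (C l m * (Complex.I * busV v θ m)) (θ m) := by
  have h := HasDerivAt.sum
    (fun k (_ : k ∈ Finset.univ) => ((hasDerivAt_busV v θ m k).const_mul (C l k)))
  convert h using 1
  · rfl
  · exact (Finset.sum_fn _ _).symm
  have key : ∀ k : nb, C l k * ((if k = m then Complex.I else 0) * busV v θ k)
      = if k = m then C l k * (Complex.I * busV v θ k) else 0 := by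
    intro k; split_ifs <;> simp
  simp only [key, Finset.sum_ite_eq' Finset.univ m
    (fun k => C l k * (Complex.I * busV v θ k)), Finset.mem_univ, ↓reduceIte]

lemma hasDerivAt_lineIfr' {nl nb : Type*} [Fintype nb] [DecidableEq nb]
    (Yf : Matrix nl nb ℂ) (v θ : nb → ℝ) (l : nl) (m : nb) :
    HasDerivAt (fun t => lineIfr Yf v (Function.update θ m t) l)
      (Yf l m * (Complex.I * busV v θ m)) (θ m) :=
  hasDerivAt_sumCV Yf v θ l m

lemma hasDerivAt_lineSfr' {nl nb : Type*} [Fintype nb] [DecidableEq nb]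
    (C Yf : Matrix nl nb ℂ) (v θ : nb → ℝ) (l : nl) (m : nb) :
    HasDerivAt (fun t => lineSfr C Yf v (Function.update θ m t) l)
      (lineDfr C Yf v θ l m) (θ m) := by
  have h := (hasDerivAt_sumCV C v θ l m).mul
    (hasDerivAt_conj' (hasDerivAt_lineIfr' Yf v θ l m))
  simp only [Function.update_eq_self] at h
  simp only [lineSfr]
  convert h using 1
  any_goals rfl
  simp only [lineDfr, _root_.map_mul, Complex.conj_I]
  ring

lemma hasDerivAt_lineDfr' {nl nb : Type*} [Fintype nb] [DecidableEq nb]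
    (C Yf : Matrix nl nb ℂ) (v θ : nb → ℝ) (l : nl) (m n : nb) :
    HasDerivAt (fun t => lineDfr C Yf v (Function.update θ m t) l n)
      (-(if n = m then 1 else 0) * C l n * busV v θ n *
          (starRingEnd ℂ) (lineIfr Yf v θ l)
        + C l n * busV v θ n * (starRingEnd ℂ) (Yf l m) *
            (starRingEnd ℂ) (busV v θ m)
        + C l m * busV v θ m * (starRingEnd ℂ) (Yf l n) *
            (starRingEnd ℂ) (busV v θ n)
        - (if n = m then 1 else 0) * (∑ k, C l k * busV v θ k) *
            (starRingEnd ℂ) (Yf l n) * (starRingEnd ℂ) (busV v θ n)) (θ m) := by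
  have hA := ((hasDerivAt_busV v θ m n).const_mul (C l n)).mul
    (hasDerivAt_conj' (hasDerivAt_lineIfr' Yf v θ l m))
  have hB := ((hasDerivAt_sumCV C v θ l m).mul_const ((starRingEnd ℂ) (Yf l n))).mul
    (hasDerivAt_conj' (hasDerivAt_busV v θ m n))
  have h := (hA.sub hB).const_mul Complex.I
  simp only [Function.update_eq_self] at h
  simp only [lineDfr]
  convert h using 1
  any_goals rfl
  simp only [_root_.map_mul, Complex.conj_I, apply_ite (starRingEnd ℂ), map_zero,
    _root_.map_one]
  split_ifs with hnm <;>
    · ring_nf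
      simp only [Complex.I_sq]
      ring

/-- The `θ_m`-partial derivative of the `θ_n`-partial derivative
`θ ↦ 2 Re(conj(S^fr_l) D_n(θ))` of the squared apparent from-end flow. -/
theorem hasDerivAt_lineSfr_normSq_angle_angle {nl nb : Type*} [Fintype nb]
    [DecidableEq nb] (C Yf : Matrix nl nb ℂ) (v θ : nb → ℝ) (l : nl) (m n : nb) :
    HasDerivAt
      (fun t : ℝ =>
        2 * ((starRingEnd ℂ) (lineSfr C Yf v (Function.update θ m t) l) *
            lineDfr C Yf v (Function.update θ m t) l n).re)
      (2 * ((starRingEnd ℂ) (lineSfr C Yf v θ l) *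
          (-(if n = m then 1 else 0) * C l n * busV v θ n *
              (starRingEnd ℂ) (lineIfr Yf v θ l)
            + C l n * busV v θ n * (starRingEnd ℂ) (Yf l m) *
                (starRingEnd ℂ) (busV v θ m)
            + C l m * busV v θ m * (starRingEnd ℂ) (Yf l n) *
                (starRingEnd ℂ) (busV v θ n)
            - (if n = m then 1 else 0) * (∑ k, C l k * busV v θ k) *
                (starRingEnd ℂ) (Yf l n) * (starRingEnd ℂ) (busV v θ n))
        + lineDfr C Yf v θ l m * (starRingEnd ℂ) (lineDfr C Yf v θ l n)).re)
      (θ m) := by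
  have hg := (hasDerivAt_conj' (hasDerivAt_lineSfr' C Yf v θ l m)).mul
    (hasDerivAt_lineDfr' C Yf v θ l m n)
  simp only [Function.update_eq_self] at hg
  have hre := (Complex.reCLM.hasFDerivAt.comp_hasDerivAt (θ m) hg)
  have h2 := hre.const_mul (2 : ℝ)
  convert h2 using 1
  any_goals rfl
  simp only [Complex.reCLM_apply]
  congr 1
  rw [Complex.add_re, Complex.add_re, add_comm]
  congr 1
  have key : lineDfr C Yf v θ l m * (starRingEnd ℂ) (lineDfr C Yf v θ l n)
      = (starRingEnd ℂ) ((starRingEnd ℂ) (lineDfr C Yf v θ l m) *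
          lineDfr C Yf v θ l n) := by
    simp [_root_.map_mul]
  rw [key, Complex.conj_re]
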